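/- (Vector-valued Burkholder-type inequality.) Let p ∈ (1,2] and let X_0, …, X_{T−1} be R^d-valued random variables such that E[X_k | X_0,…,X_{k−1}] = 0 and E[‖X_k‖^p] < ∞ for each k. Then E[‖∑_{k=0}^{T−1} X_k‖^p] ≤ 2^{2−p} · ∑_{k=0}^{T−1} E[‖X_k‖^p]. -/

import Mathlib

open MeasureTheory Real
open scoped ENNReal NNReal

/-- Tangent-line inequality for concave `rpow`. -/
lemma rpow_tangent {A B c : ℝ} (hA : 0 ≤ A) (hB : 0 < B) (hc0 : 0 ≤ c) (hc1 : c ≤ 1) :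
    A ^ c ≤ B ^ c + c * B ^ (c - 1) * (A - B) := by
  have hs : (-1 : ℝ) ≤ A / B - 1 := by
    have : 0 ≤ A / B := div_nonneg hA hB.le
    linarith
  have h := rpow_one_add_le_one_add_mul_self hs hc0 hc1
  have h1 : (1 + (A / B - 1)) = A / B := by ring
  rw [h1] at h
  have hBc : 0 < B ^ c := rpow_pos_of_pos hB c
  have h2 := mul_le_mul_of_nonneg_left h hBc.le
  calc A ^ c = B ^ c * (A / B) ^ c := by
        rw [← Real.mul_rpow hB.le (div_nonneg hA hB.le), mul_div_cancel₀ _ hB.ne']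
    _ ≤ B ^ c * (1 + c * (A / B - 1)) := h2
    _ = B ^ c + c * (B ^ c / B) * (A - B) := by field_simp
    _ = B ^ c + c * B ^ (c - 1) * (A - B) := by rw [Real.rpow_sub_one hB.ne']

/-- The 1D boundary inequality: `(b-1)^p + p*b ≤ 1 + 2^(2-p) * b^p` for `b ≥ 2`. -/
lemma oneDim {p : ℝ} (hp1 : 1 < p) (hp2 : p ≤ 2) {b : ℝ} (hb : 2 ≤ b) :
    (b - 1) ^ p + p * b ≤ 1 + 2 ^ (2 - p) * b ^ p := by
  set c : ℝ := 2 ^ (2 - p) with hc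
  have hcpos : (0:ℝ) < c := rpow_pos_of_pos two_pos _
  -- G b = c * b^(p-1) - (b-1)^(p-1) - 1
  set G : ℝ → ℝ := fun x => c * x ^ (p - 1) - (x - 1) ^ (p - 1) - 1 with hG
  have hGderiv : ∀ x ∈ Set.Ici (2:ℝ),
      HasDerivAt G ((p-1) * (c * x ^ (p - 2) - (x - 1) ^ (p - 2))) x := by
    intro x hx
    have hx2 : (2:ℝ) ≤ x := hx
    have hx0 : x ≠ 0 := by positivity
    have hx1 : x - 1 ≠ 0 := by nlinarith
    have d1 : HasDerivAt (fun y : ℝ => y ^ (p-1)) ((p-1) * x ^ (p-1-1)) x :=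
      Real.hasDerivAt_rpow_const (Or.inl hx0)
    have d2 : HasDerivAt (fun y : ℝ => (y - 1) ^ (p-1)) (1 * (p-1) * (x-1) ^ (p-1-1)) x := by
      have := HasDerivAt.rpow_const (p := p - 1) ((hasDerivAt_id x).sub_const 1) (Or.inl hx1)
      simpa using this
    have := ((d1.const_mul c).sub d2).sub_const 1
    refine this.congr_deriv ?_
    ring_nf
  have hGmono : MonotoneOn G (Set.Ici (2:ℝ)) := by
    apply monotoneOn_of_deriv_nonneg (convex_Ici 2)
    · exact fun x hx => ((hGderiv x hx).continuousAt).continuousWithinAt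
    · intro x hx
      rw [interior_Ici] at hx
      exact ((hGderiv x (Set.Ioi_subset_Ici_self hx)).differentiableAt).differentiableWithinAt
    · intro x hx
      rw [interior_Ici] at hx
      have hx2 : (2:ℝ) < x := hx
      rw [(hGderiv x hx2.le).deriv]
      have key : (x - 1) ^ (p - 2) ≤ c * x ^ (p - 2) := by
        have hb1 : (0:ℝ) < x - 1 := by linarith
        have hxpos : (0:ℝ) < x := by linarith
        have h1 : x ^ (2 - p) ≤ 2 ^ (2-p) * (x - 1) ^ (2 - p) := by
          rw [← Real.mul_rpow (by norm_num) hb1.le]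
          exact Real.rpow_le_rpow hxpos.le (by linarith) (by linarith)
        have e1 : (x - 1) ^ (p - 2) = ((x-1) ^ (2-p))⁻¹ := by
          rw [← Real.rpow_neg hb1.le]; ring_nf
        have e2 : x ^ (p - 2) = (x ^ (2-p))⁻¹ := by
          rw [← Real.rpow_neg hxpos.le]; ring_nf
        rw [e1, e2, hc]
        have hxp : (0:ℝ) < x ^ (2-p) := rpow_pos_of_pos hxpos _
        have hbp : (0:ℝ) < (x-1) ^ (2-p) := rpow_pos_of_pos hb1 _
        have hi1 : (0:ℝ) < (x ^ (2-p))⁻¹ := inv_pos.mpr hxp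
        have hi2 : (0:ℝ) < ((x-1) ^ (2-p))⁻¹ := inv_pos.mpr hbp
        have m1 : x ^ (2-p) * (x ^ (2-p))⁻¹ = 1 := mul_inv_cancel₀ hxp.ne'
        have m2 : (x-1) ^ (2-p) * ((x-1) ^ (2-p))⁻¹ = 1 := mul_inv_cancel₀ hbp.ne'
        nlinarith [mul_le_mul_of_nonneg_left h1 (le_of_lt (mul_pos hi1 hi2))]
      nlinarith [key]
  have hG2 : G 2 = 0 := by
    have : c * 2 ^ (p-1) = 2 := by
      rw [hc, ← Real.rpow_add two_pos]; norm_num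
    simp only [hG]
    rw [this]
    norm_num
  have hGnonneg : ∀ x ∈ Set.Ici (2:ℝ), 0 ≤ G x := by
    intro x hx
    have := hGmono (Set.self_mem_Ici) hx hx
    rw [hG2] at this; exact this
  -- H x = 1 + c * x^p - (x-1)^p - p*x
  set H : ℝ → ℝ := fun x => 1 + c * x ^ p - (x - 1) ^ p - p * x with hH
  have hHderiv : ∀ x ∈ Set.Ici (2:ℝ), HasDerivAt H (p * G x) x := by
    intro x hx
    have hx2 : (2:ℝ) ≤ x := hx
    have hx0 : x ≠ 0 := by positivity
    have hx1 : x - 1 ≠ 0 := by nlinarith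
    have d1 : HasDerivAt (fun y : ℝ => y ^ p) (p * x ^ (p-1)) x :=
      Real.hasDerivAt_rpow_const (Or.inl hx0)
    have d2 : HasDerivAt (fun y : ℝ => (y - 1) ^ p) (1 * p * (x-1) ^ (p-1)) x := by
      have := HasDerivAt.rpow_const (p := p) ((hasDerivAt_id x).sub_const 1) (Or.inl hx1)
      simpa using this
    have d3 : HasDerivAt (fun y : ℝ => p * y) p x := by
      simpa using (hasDerivAt_id x).const_mul p
    have := (((d1.const_mul c).const_add 1).sub d2).sub d3
    refine this.congr_deriv ?_
    simp only [hG]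
    ring
  have hHmono : MonotoneOn H (Set.Ici (2:ℝ)) := by
    apply monotoneOn_of_deriv_nonneg (convex_Ici 2)
    · exact fun x hx => ((hHderiv x hx).continuousAt).continuousWithinAt
    · intro x hx
      rw [interior_Ici] at hx
      exact ((hHderiv x (Set.Ioi_subset_Ici_self hx)).differentiableAt).differentiableWithinAt
    · intro x hx
      rw [interior_Ici] at hx
      have hx2 : (2:ℝ) < x := hx
      rw [(hHderiv x hx2.le).deriv]
      exact mul_nonneg (by linarith) (hGnonneg x hx2.le)
  have hH2 : 0 ≤ H 2 := by
    have h4 : c * 2 ^ p = 4 := by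
      rw [hc, ← Real.rpow_add two_pos]
      norm_num
    simp only [hH]
    rw [h4]
    norm_num
    linarith
  have := hHmono (Set.self_mem_Ici) hb hb
  have hHb : 0 ≤ H b := le_trans hH2 this
  simp only [hH] at hHb
  linarith


/-- Normalized scalar inequality. -/
lemma scalar1 {p : ℝ} (hp1 : 1 < p) (hp2 : p ≤ 2) {b t : ℝ} (hb : 0 ≤ b) (ht : |t| ≤ b) :
    (1 + 2*t + b^2) ^ (p/2) ≤ 1 + p * t + 2 ^ (2-p) * b ^ p := by
  have htlb : -b ≤ t := neg_le_of_abs_le ht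
  have htub : t ≤ b := le_of_abs_le ht
  have hA : 0 ≤ 1 + 2*t + b^2 := by nlinarith [sq_nonneg (1-b)]
  have hc0 : (0:ℝ) ≤ p/2 := by linarith
  have hc1 : p/2 ≤ 1 := by linarith
  rcases le_or_gt b 2 with hble | hbgt
  · -- tangent at B = 1
    have h := rpow_tangent (B := 1) hA one_pos hc0 hc1
    rw [Real.one_rpow, Real.one_rpow] at h
    have h' : (1 + 2*t + b^2) ^ (p/2) ≤ 1 + p * t + (p/2) * b^2 := by
      calc (1 + 2*t + b^2) ^ (p/2) ≤ 1 + p/2 * 1 * (1 + 2*t + b^2 - 1) := h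
        _ = 1 + p * t + (p/2) * b^2 := by ring
    refine h'.trans ?_
    have key : (p/2) * b^2 ≤ 2 ^ (2-p) * b ^ p := by
      rcases eq_or_lt_of_le hb with hb0 | hb0
      · rw [← hb0]
        rw [Real.zero_rpow (by linarith)]
        norm_num
      · have e : b^2 = b ^ (2-p) * b ^ p := by
          rw [← Real.rpow_add hb0, ← Real.rpow_natCast b 2]
          norm_num
        rw [e, ← mul_assoc]
        have h1 : b ^ (2-p) ≤ 2 ^ (2-p) := Real.rpow_le_rpow hb hble (by linarith)
        have h2 : (p/2) * b ^ (2-p) ≤ 1 * (2 ^ (2-p)) := by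
          apply mul_le_mul hc1 h1 (Real.rpow_nonneg hb _) (by norm_num)
        have hbp : (0:ℝ) ≤ b ^ p := Real.rpow_nonneg hb _
        calc p/2 * b ^ (2-p) * b ^ p ≤ 1 * 2 ^ (2-p) * b ^ p :=
              mul_le_mul_of_nonneg_right h2 hbp
          _ = 2 ^ (2-p) * b ^ p := by ring
    linarith
  · -- b > 2 : tangent at B = (b-1)^2
    have hb1 : (1:ℝ) ≤ b - 1 := by linarith
    have hb1' : (0:ℝ) < b - 1 := by linarith
    have hB : (0:ℝ) < (b-1)^2 := by positivity
    have h := rpow_tangent (B := (b-1)^2) hA hB hc0 hc1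
    have eB : ((b-1)^2 : ℝ) ^ (p/2) = (b-1) ^ p := by
      rw [← Real.rpow_natCast (b-1) 2, ← Real.rpow_mul hb1'.le,
        show ((2:ℕ):ℝ) * (p/2) = p by push_cast; ring]
    have eB' : ((b-1)^2 : ℝ) ^ (p/2 - 1) = (b-1) ^ (p - 2) := by
      rw [← Real.rpow_natCast (b-1) 2, ← Real.rpow_mul hb1'.le,
        show ((2:ℕ):ℝ) * (p/2 - 1) = p - 2 by push_cast; ring]
    rw [eB, eB'] at h
    have hdiff : 1 + 2*t + b^2 - (b-1)^2 = 2*(t + b) := by ring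
    rw [hdiff] at h
    have hsmall : (b-1) ^ (p-2) ≤ 1 :=
      Real.rpow_le_one_of_one_le_of_nonpos hb1 (by linarith)
    have htb : (0:ℝ) ≤ t + b := by linarith
    have h2 : p/2 * (b-1) ^ (p-2) * (2*(t+b)) ≤ p/2 * 1 * (2*(t+b)) := by
      apply mul_le_mul_of_nonneg_right _ (by linarith)
      apply mul_le_mul_of_nonneg_left hsmall (by linarith)
    have h3 : (1 + 2*t + b^2) ^ (p/2) ≤ (b-1)^p + p*t + p*b := by
      calc (1 + 2*t + b^2) ^ (p/2) ≤ (b-1)^p + p/2 * (b-1) ^ (p-2) * (2*(t+b)) := h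
        _ ≤ (b-1)^p + p/2 * 1 * (2*(t+b)) := by linarith
        _ = (b-1)^p + p*t + p*b := by ring
    have h4 := oneDim hp1 hp2 (le_of_lt hbgt)
    linarith

open RealInnerProductSpace in
/-- The key vector inequality in a real inner product space. -/
lemma key_ineq {E : Type*} [NormedAddCommGroup E] [InnerProductSpace ℝ E]
    {p : ℝ} (hp1 : 1 < p) (hp2 : p ≤ 2) (x y : E) :
    ‖x + y‖ ^ p ≤ ‖x‖ ^ p + p * ‖x‖ ^ (p-2) * ⟪x, y⟫ + 2 ^ (2-p) * ‖y‖ ^ p := by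
  rcases eq_or_ne x 0 with rfl | hx
  · simp only [norm_zero, zero_add, inner_zero_left, mul_zero, add_zero]
    rw [Real.zero_rpow (by linarith : p ≠ 0), zero_add]
    have h1 : (1:ℝ) ≤ 2 ^ (2-p) := Real.one_le_rpow one_le_two (by linarith)
    have := Real.rpow_nonneg (norm_nonneg y) p
    nlinarith
  · have ha : (0:ℝ) < ‖x‖ := norm_pos_iff.mpr hx
    set a := ‖x‖ with hadef
    set b := ‖y‖ / a with hbdef
    set t := ⟪x, y⟫ / a^2 with htdef
    have hb : 0 ≤ b := div_nonneg (norm_nonneg y) ha.le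
    have ht : |t| ≤ b := by
      have h := abs_real_inner_le_norm x y
      rw [← hadef] at h
      rw [htdef, hbdef, abs_div, abs_of_nonneg (sq_nonneg a)]
      rw [div_le_div_iff₀ (by positivity) ha]
      nlinarith [abs_nonneg ⟪x, y⟫]
    have key := scalar1 hp1 hp2 hb ht
    have hap : (0:ℝ) < a ^ p := Real.rpow_pos_of_pos ha p
    have key2 := mul_le_mul_of_nonneg_left key hap.le
    -- LHS transformation
    have hA : (0:ℝ) ≤ 1 + 2*t + b^2 := by
      have := abs_le.mp ht
      nlinarith [sq_nonneg (1-b)]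
    have e1 : a ^ p = (a^2 : ℝ) ^ (p/2) := by
      rw [← Real.rpow_natCast a 2, ← Real.rpow_mul ha.le]
      norm_num
      rw [show (2:ℝ) * (p/2) = p by ring]
    have e2 : a ^ p * (1 + 2*t + b^2) ^ (p/2) = (a^2 * (1 + 2*t + b^2)) ^ (p/2) := by
      rw [e1, ← Real.mul_rpow (by positivity) hA]
    have e3 : a^2 * (1 + 2*t + b^2) = ‖x + y‖^2 := by
      have hxy : ‖x + y‖^2 = a^2 + 2 * ⟪x, y⟫ + ‖y‖^2 := norm_add_sq_real x y
      rw [hxy, htdef, hbdef]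
      field_simp
    have e4 : ‖x + y‖ ^ p = (‖x + y‖^2 : ℝ) ^ (p/2) := by
      rw [← Real.rpow_natCast ‖x + y‖ 2, ← Real.rpow_mul (norm_nonneg _)]
      norm_num
      rw [show (2:ℝ) * (p/2) = p by ring]
    have eLHS : a ^ p * (1 + 2*t + b^2) ^ (p/2) = ‖x + y‖ ^ p := by
      rw [e2, e3, e4]
    -- RHS transformation
    have e5 : a ^ p * (p * t) = p * a ^ (p-2) * ⟪x, y⟫ := by
      have : a ^ (p-2) = a ^ p / a^2 := by
        rw [Real.rpow_sub ha, ← Real.rpow_natCast a 2]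
        norm_num
      rw [this, htdef]
      field_simp
    have e6 : a ^ p * b ^ p = ‖y‖ ^ p := by
      rw [hbdef, ← Real.mul_rpow ha.le (div_nonneg (norm_nonneg y) ha.le),
        mul_div_cancel₀ _ ha.ne']
    calc ‖x + y‖ ^ p = a ^ p * (1 + 2*t + b^2) ^ (p/2) := eLHS.symm
      _ ≤ a ^ p * (1 + p * t + 2 ^ (2-p) * b ^ p) := key2
      _ = a ^ p + p * a ^ (p-2) * ⟪x, y⟫ + 2 ^ (2-p) * ‖y‖ ^ p := by
          rw [mul_add, mul_add, mul_one, e5, mul_comm (2 ^ (2-p) : ℝ) (b ^ p), ← mul_assoc, e6]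
          ring

section Prob

variable {Ω : Type*} {mΩ : MeasurableSpace Ω} {μ : Measure Ω}
variable {E : Type*} [NormedAddCommGroup E]

lemma lint_lt_top {p : ℝ} (hp0 : 0 < p) {f : Ω → E}
    (hf : MemLp f (ENNReal.ofReal p) μ) :
    ∫⁻ ω, (‖f ω‖₊ : ℝ≥0∞) ^ p ∂μ < ⊤ := by
  have hPne : (ENNReal.ofReal p) ≠ 0 := by
    simp only [ne_eq, ENNReal.ofReal_eq_zero, not_le]; exact hp0
  have h2 := hf.2
  rw [eLpNorm_eq_lintegral_rpow_enorm_toReal hPne ENNReal.ofReal_ne_top,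
    ENNReal.toReal_ofReal hp0.le] at h2
  simp only [enorm_eq_nnnorm] at h2
  by_contra hcon
  rw [not_lt, top_le_iff] at hcon
  rw [hcon, ENNReal.top_rpow_of_pos (by positivity)] at h2
  exact (lt_irrefl _ h2).elim

lemma holder_integrable {p : ℝ} (hp1 : 1 < p) {f g : Ω → E}
    (hf : MemLp f (ENNReal.ofReal p) μ) (hg : MemLp g (ENNReal.ofReal p) μ) :
    Integrable (fun ω => ‖f ω‖ ^ (p-1) * ‖g ω‖) μ := by
  have hp0 : (0:ℝ) < p := by linarith
  have hq : Real.HolderConjugate (p/(p-1)) p := (Real.HolderConjugate.conjExponent hp1).symm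
  have hfm : AEMeasurable (fun ω => (‖f ω‖₊ : ℝ≥0∞) ^ (p-1)) μ :=
    hf.1.enorm.pow_const _
  have hgm : AEMeasurable (fun ω => (‖g ω‖₊ : ℝ≥0∞)) μ :=
    hg.1.enorm
  have key := ENNReal.lintegral_mul_le_Lp_mul_Lq μ hq hfm hgm
  have e1 : ∀ ω, ((‖f ω‖₊ : ℝ≥0∞) ^ (p-1)) ^ (p/(p-1)) = (‖f ω‖₊ : ℝ≥0∞) ^ p := by
    intro ω
    rw [← ENNReal.rpow_mul]
    congr 1
    rw [mul_div_assoc', mul_comm, mul_div_assoc, div_self (by linarith : p - 1 ≠ 0), mul_one]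
  simp_rw [e1] at key
  have hfin1 : (∫⁻ ω, (‖f ω‖₊ : ℝ≥0∞) ^ p ∂μ) ^ (1/(p/(p-1))) < ⊤ :=
    ENNReal.rpow_lt_top_of_nonneg
      (div_nonneg zero_le_one (div_nonneg hp0.le (by linarith))) (lint_lt_top hp0 hf).ne
  have hfin2 : (∫⁻ ω, (‖g ω‖₊ : ℝ≥0∞) ^ p ∂μ) ^ (1/p) < ⊤ :=
    ENNReal.rpow_lt_top_of_nonneg (by positivity) (lint_lt_top hp0 hg).ne
  have hfin : ∫⁻ ω, (‖f ω‖₊ : ℝ≥0∞) ^ (p-1) * (‖g ω‖₊ : ℝ≥0∞) ∂μ < ⊤ :=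
    lt_of_le_of_lt key (ENNReal.mul_lt_top hfin1 hfin2)
  constructor
  · exact ((hf.1.norm.aemeasurable.pow_const (p-1)).mul
      hg.1.norm.aemeasurable).aestronglyMeasurable
  · show (∫⁻ ω, (‖‖f ω‖ ^ (p-1) * ‖g ω‖‖₊ : ℝ≥0∞) ∂μ) < ⊤
    refine lt_of_le_of_lt (le_of_eq (lintegral_congr fun ω => ?_)) hfin
    have h1 : (0:ℝ) ≤ ‖f ω‖ ^ (p-1) := Real.rpow_nonneg (norm_nonneg _) _
    rw [← enorm_eq_nnnorm, ← ofReal_norm_eq_enorm, Real.norm_eq_abs,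
      abs_of_nonneg (mul_nonneg h1 (norm_nonneg _)), ENNReal.ofReal_mul h1,
      ← ENNReal.ofReal_rpow_of_nonneg (norm_nonneg _) (by linarith),
      ofReal_norm_eq_enorm, ofReal_norm_eq_enorm, enorm_eq_nnnorm, enorm_eq_nnnorm]

end Prob

lemma coord_abs_le_norm {d : ℕ} (x : EuclideanSpace ℝ (Fin d)) (i : Fin d) : |x i| ≤ ‖x‖ := by
  rw [EuclideanSpace.norm_eq]
  have h1 : |x i| = Real.sqrt (‖x i‖^2) := by
    rw [Real.sqrt_sq_eq_abs, Real.norm_eq_abs, abs_abs]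
  rw [h1]
  apply Real.sqrt_le_sqrt
  exact Finset.single_le_sum (fun j _ => sq_nonneg ‖x j‖) (Finset.mem_univ i)


lemma coord_integral {Ω : Type*} {mΩ : MeasurableSpace Ω} (μ : Measure Ω) {d : ℕ}
    {X : Ω → EuclideanSpace ℝ (Fin d)} (h : Integrable X μ) (i : Fin d) :
    ∫ x, X x i ∂μ = (∫ x, X x ∂μ) i := by
  have := (EuclideanSpace.proj i (𝕜 := ℝ)).integral_comp_comm h
  simpa using this

open RealInnerProductSpace in
lemma integral_inner_eq_zero
    {Ω : Type*} {m0 : MeasurableSpace Ω} {μ : Measure Ω} [IsProbabilityMeasure μ] {d : ℕ}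
    {F : MeasurableSpace Ω} (hm : F ≤ m0)
    {V X : Ω → EuclideanSpace ℝ (Fin d)}
    (hVmeas : Measurable[F] V) (hXint : Integrable X μ)
    (hcond : μ[X | F] =ᵐ[μ] 0)
    (hdom : Integrable (fun ω => ‖V ω‖ * ‖X ω‖) μ) :
    ∫ ω, ⟪V ω, X ω⟫ ∂μ = 0 := by
  haveI : SigmaFinite (μ.trim hm) := inferInstance
  -- coordinate integrability of X
  have hXi : ∀ i : Fin d, Integrable (fun ω => X ω i) μ := by
    intro i
    have := (EuclideanSpace.proj i (𝕜 := ℝ)).integrable_comp hXint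
    simpa using this
  -- coordinate conditional expectation vanishes
  have hci : ∀ i : Fin d, μ[fun ω => X ω i | F] =ᵐ[μ] 0 := by
    intro i
    refine (ae_eq_condExp_of_forall_setIntegral_eq hm (hXi i)
      (fun s _ _ => (integrable_zero _ _ (μ.restrict s))) (fun s hs hμs => ?_)
      (stronglyMeasurable_const.aestronglyMeasurable)).symm
    have h0 : ∫ x in s, X x ∂μ = 0 := by
      calc ∫ x in s, X x ∂μ = ∫ x in s, (μ[X|F]) x ∂μ := (setIntegral_condExp hm hXint hs).symm
        _ = ∫ x in s, (0 : EuclideanSpace ℝ (Fin d)) ∂μ :=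
            integral_congr_ae (ae_restrict_of_ae hcond)
        _ = 0 := integral_zero _ _
    have h1 : ∫ x in s, X x i ∂μ = (∫ x in s, X x ∂μ) i :=
      coord_integral (μ.restrict s) (hXint.restrict (s := s)) i
    rw [h1, h0]
    simp
  -- coordinate functions of V
  have hVim : ∀ i : Fin d, StronglyMeasurable[F] (fun ω => V ω i) := by
    intro i
    exact (((EuclideanSpace.proj i (𝕜 := ℝ)).continuous.measurable).comp hVmeas).stronglyMeasurable
  have hVXint : ∀ i : Fin d, Integrable (fun ω => V ω i * X ω i) μ := by
    intro i
    refine hdom.mono' ?_ ?_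
    · refine ((((EuclideanSpace.proj i (𝕜 := ℝ)).continuous.measurable).comp
        (hVmeas.mono hm le_rfl)).mul
        (((EuclideanSpace.proj i (𝕜 := ℝ)).continuous.measurable).comp
          hXint.1.aemeasurable.measurable_mk)).aestronglyMeasurable.congr ?_
      filter_upwards [hXint.1.aemeasurable.ae_eq_mk] with ω h
      show (EuclideanSpace.proj i) (V ω) * (EuclideanSpace.proj i) (AEMeasurable.mk X _ ω) = _
      rw [← h]
      rfl
    · filter_upwards with ω
      rw [Real.norm_eq_abs, abs_mul]
      exact mul_le_mul (coord_abs_le_norm _ i) (coord_abs_le_norm _ i)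
        (abs_nonneg _) (norm_nonneg _)
  -- each coordinate integral vanishes
  have hzero : ∀ i : Fin d, ∫ ω, V ω i * X ω i ∂μ = 0 := by
    intro i
    have hmul := condExp_mul_of_stronglyMeasurable_left (hVim i) (hVXint i) (hXi i)
    have h2 : (fun ω => V ω i) * μ[fun ω => X ω i|F] =ᵐ[μ] 0 := by
      filter_upwards [hci i] with ω h
      simp only [Pi.mul_apply, Pi.zero_apply, h, mul_zero]
    calc ∫ ω, V ω i * X ω i ∂μ = ∫ ω, (μ[(fun ω => V ω i) * (fun ω => X ω i)|F]) ω ∂μ :=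
          (integral_condExp hm).symm
      _ = ∫ ω, (0 : Ω → ℝ) ω ∂μ := integral_congr_ae (hmul.trans h2)
      _ = 0 := by simp
  -- put together
  have hinner : ∀ ω, ⟪V ω, X ω⟫ = ∑ i : Fin d, V ω i * X ω i := by
    intro ω
    simp [PiLp.inner_apply, RCLike.inner_apply, starRingEnd_apply]
    exact Finset.sum_congr rfl fun i _ => mul_comm _ _
  calc ∫ ω, ⟪V ω, X ω⟫ ∂μ = ∫ ω, ∑ i : Fin d, V ω i * X ω i ∂μ := by simp_rw [hinner]
    _ = ∑ i : Fin d, ∫ ω, V ω i * X ω i ∂μ := integral_finset_sum _ (fun i _ => hVXint i)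
    _ = 0 := by simp [hzero]

lemma grad_measurable (d : ℕ) (p : ℝ) :
    Measurable (fun x : EuclideanSpace ℝ (Fin d) => (p * ‖x‖ ^ (p-2)) • x) :=
  ((measurable_norm.pow_const (p-2)).const_mul p).smul measurable_id

open RealInnerProductSpace

/-- Vector-valued Burkholder-type inequality for martingale difference
sequences in `ℝ^d`. -/
theorem vector_burkholder
    {Ω : Type*} [m0 : MeasurableSpace Ω] (μ : Measure Ω) [IsProbabilityMeasure μ]
    (d : ℕ) (p : ℝ) (hp1 : 1 < p) (hp2 : p ≤ 2)
    (T : ℕ) (X : ℕ → Ω → EuclideanSpace ℝ (Fin d))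
    (hmeas : ∀ k < T, Measurable (X k))
    (hmom : ∀ k < T, ∫⁻ ω, (‖X k ω‖₊ : ℝ≥0∞) ^ p ∂μ < ⊤)
    (hcond : ∀ k < T,
      μ[X k | ⨆ i ∈ Finset.range k, MeasurableSpace.comap (X i) inferInstance]
        =ᵐ[μ] 0) :
    ∫⁻ ω, (‖∑ k ∈ Finset.range T, X k ω‖₊ : ℝ≥0∞) ^ p ∂μ
      ≤ ENNReal.ofReal ((2 : ℝ) ^ (2 - p)) *
        ∑ k ∈ Finset.range T, ∫⁻ ω, (‖X k ω‖₊ : ℝ≥0∞) ^ p ∂μ := by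
  have hp0 : (0:ℝ) < p := by linarith
  have hPne : (ENNReal.ofReal p) ≠ 0 := by
    simp only [ne_eq, ENNReal.ofReal_eq_zero, not_le]; exact hp0
  have hPtop : (ENNReal.ofReal p) ≠ ⊤ := ENNReal.ofReal_ne_top
  have hPre : (ENNReal.ofReal p).toReal = p := ENNReal.toReal_ofReal hp0.le
  have hP1 : 1 ≤ ENNReal.ofReal p := ENNReal.one_le_ofReal.mpr hp1.le
  -- membership in L^p
  have hXmem : ∀ k < T, MemLp (X k) (ENNReal.ofReal p) μ := by
    intro k hk
    refine ⟨(hmeas k hk).aestronglyMeasurable, ?_⟩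
    rw [eLpNorm_eq_lintegral_rpow_enorm_toReal hPne hPtop, hPre]
    exact ENNReal.rpow_lt_top_of_nonneg (by positivity) (hmom k hk).ne
  set S : ℕ → Ω → EuclideanSpace ℝ (Fin d) := fun n ω => ∑ k ∈ Finset.range n, X k ω
    with hSdef
  have hSmem : ∀ n ≤ T, MemLp (S n) (ENNReal.ofReal p) μ := by
    intro n hn
    exact memLp_finset_sum _ (fun k hk =>
      hXmem k (lt_of_lt_of_le (Finset.mem_range.mp hk) hn))
  -- conversion between lintegral and integral
  have lint_eq : ∀ {f : Ω → EuclideanSpace ℝ (Fin d)}, MemLp f (ENNReal.ofReal p) μ →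
      ∫⁻ ω, (‖f ω‖₊ : ℝ≥0∞) ^ p ∂μ = ENNReal.ofReal (∫ ω, ‖f ω‖ ^ p ∂μ) := by
    intro f hf
    have hint : Integrable (fun ω => ‖f ω‖ ^ p) μ := by
      have := hf.integrable_norm_rpow hPne hPtop
      rwa [hPre] at this
    rw [ofReal_integral_eq_lintegral_ofReal hint
      (Filter.Eventually.of_forall fun ω => Real.rpow_nonneg (norm_nonneg _) _)]
    refine lintegral_congr fun ω => ?_
    rw [← ENNReal.ofReal_rpow_of_nonneg (norm_nonneg _) hp0.le, ofReal_norm_eq_enorm, enorm_eq_nnnorm]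
  have hint_norm : ∀ {f : Ω → EuclideanSpace ℝ (Fin d)}, MemLp f (ENNReal.ofReal p) μ →
      Integrable (fun ω => ‖f ω‖ ^ p) μ := by
    intro f hf
    have := hf.integrable_norm_rpow hPne hPtop
    rwa [hPre] at this
  -- the main real-valued induction
  have main : ∀ n, n ≤ T →
      ∫ ω, ‖S n ω‖ ^ p ∂μ ≤ 2 ^ (2-p) * ∑ k ∈ Finset.range n, ∫ ω, ‖X k ω‖ ^ p ∂μ := by
    intro n
    induction n with
    | zero =>
      intro _
      simp only [hSdef, Finset.range_zero, Finset.sum_empty]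
      rw [show ∫ ω, ‖(0 : EuclideanSpace ℝ (Fin d))‖ ^ p ∂μ = 0 by
        simp [Real.zero_rpow (by linarith : p ≠ 0)]]
      simp
    | succ n ih =>
      intro hn1
      have hn : n < T := hn1
      have hn' : n ≤ T := hn.le
      have ihn := ih hn'
      -- the sigma-algebra
      set F : MeasurableSpace Ω :=
        ⨆ i ∈ Finset.range n, MeasurableSpace.comap (X i) inferInstance with hF
      have hm : F ≤ m0 := by
        refine iSup₂_le fun i hi => ?_
        exact (hmeas i (lt_of_lt_of_le (Finset.mem_range.mp hi) hn')).comap_le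
      have hSF : Measurable[F] (S n) := by
        refine Finset.measurable_sum _ fun i hi => ?_
        have hle : MeasurableSpace.comap (X i) inferInstance ≤ F := by
          rw [hF]; exact le_iSup₂ (f := fun i (_ : i ∈ Finset.range n) =>
            MeasurableSpace.comap (X i) inferInstance) i hi
        exact Measurable.mono (comap_measurable (X i)) hle le_rfl
      -- the gradient-like field
      set V : Ω → EuclideanSpace ℝ (Fin d) :=
        fun ω => (p * ‖S n ω‖ ^ (p-2)) • S n ω with hV
      have hVF : Measurable[F] V := (grad_measurable d p).comp hSF
      have hVnorm : ∀ ω, ‖V ω‖ = p * ‖S n ω‖ ^ (p-1) := by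
        intro ω
        rw [hV]
        simp only [norm_smul, Real.norm_eq_abs]
        rw [abs_of_nonneg (mul_nonneg hp0.le (Real.rpow_nonneg (norm_nonneg _) _)),
          mul_assoc]
        congr 1
        rcases eq_or_ne (‖S n ω‖) 0 with h | h
        · rw [h, Real.zero_rpow (by linarith : p - 1 ≠ 0), mul_zero]
        · rw [show p - 1 = (p-2) + 1 by ring, Real.rpow_add_one h]
      have hdom : Integrable (fun ω => ‖V ω‖ * ‖X n ω‖) μ := by
        refine ((holder_integrable hp1 (hSmem n hn') (hXmem n hn)).const_mul p).congr ?_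
        filter_upwards with ω
        rw [hVnorm ω]
        ring
      have hzero : ∫ ω, ⟪V ω, X n ω⟫ ∂μ = 0 :=
        integral_inner_eq_zero hm hVF ((hXmem n hn).integrable hP1) (hcond n hn) hdom
      -- pointwise inequality
      have hpt : ∀ ω, ‖S (n+1) ω‖ ^ p ≤
          ‖S n ω‖ ^ p + ⟪V ω, X n ω⟫ + 2 ^ (2-p) * ‖X n ω‖ ^ p := by
        intro ω
        have hkey := key_ineq hp1 hp2 (S n ω) (X n ω)
        have hsum : S (n+1) ω = S n ω + X n ω := by
          simp only [hSdef]
          exact Finset.sum_range_succ _ _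
        rw [hsum]
        have hinner : ⟪V ω, X n ω⟫ = p * ‖S n ω‖ ^ (p-2) * ⟪S n ω, X n ω⟫ := by
          rw [hV]; exact real_inner_smul_left _ _ _
        rw [hinner]
        exact hkey
      -- integrability of all pieces
      have hiS : Integrable (fun ω => ‖S n ω‖ ^ p) μ := hint_norm (hSmem n hn')
      have hiX : Integrable (fun ω => ‖X n ω‖ ^ p) μ := hint_norm (hXmem n hn)
      have hiSucc : Integrable (fun ω => ‖S (n+1) ω‖ ^ p) μ := hint_norm (hSmem (n+1) hn1)
      have hiInner : Integrable (fun ω => ⟪V ω, X n ω⟫) μ := by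
        refine hdom.mono' ?_ ?_
        · exact (Measurable.inner (hVF.mono hm le_rfl) (hmeas n hn)).aestronglyMeasurable
        · filter_upwards with ω
          rw [Real.norm_eq_abs]
          exact abs_real_inner_le_norm _ _
      -- integrate
      have hstep : ∫ ω, ‖S (n+1) ω‖ ^ p ∂μ ≤
          ∫ ω, ‖S n ω‖ ^ p ∂μ + ∫ ω, ⟪V ω, X n ω⟫ ∂μ + 2 ^ (2-p) * ∫ ω, ‖X n ω‖ ^ p ∂μ := by
        have hAB : Integrable (fun ω => ‖S n ω‖ ^ p + ⟪V ω, X n ω⟫) μ := hiS.add hiInner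
        have hC : Integrable (fun ω => 2 ^ (2-p) * ‖X n ω‖ ^ p) μ := hiX.const_mul _
        have h1 : ∫ ω, ‖S (n+1) ω‖ ^ p ∂μ ≤
            ∫ ω, (‖S n ω‖ ^ p + ⟪V ω, X n ω⟫ + 2 ^ (2-p) * ‖X n ω‖ ^ p) ∂μ := by
          refine integral_mono hiSucc ?_ (fun ω => hpt ω)
          exact hAB.add hC
        rw [integral_add hAB hC, integral_add hiS hiInner,
          integral_const_mul] at h1
        exact h1
      rw [hzero, add_zero] at hstep
      calc ∫ ω, ‖S (n+1) ω‖ ^ p ∂μ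
          ≤ ∫ ω, ‖S n ω‖ ^ p ∂μ + 2 ^ (2-p) * ∫ ω, ‖X n ω‖ ^ p ∂μ := hstep
        _ ≤ 2 ^ (2-p) * ∑ k ∈ Finset.range n, (∫ ω, ‖X k ω‖ ^ p ∂μ)
            + 2 ^ (2-p) * ∫ ω, ‖X n ω‖ ^ p ∂μ := by linarith
        _ = 2 ^ (2-p) * ∑ k ∈ Finset.range (n+1), ∫ ω, ‖X k ω‖ ^ p ∂μ := by
            rw [Finset.sum_range_succ]; ring
  -- conclude in ℝ≥0∞
  have hmain := main T le_rfl
  have hL : ∫⁻ ω, (‖∑ k ∈ Finset.range T, X k ω‖₊ : ℝ≥0∞) ^ p ∂μ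
      = ENNReal.ofReal (∫ ω, ‖S T ω‖ ^ p ∂μ) := lint_eq (hSmem T le_rfl)
  have hR : ∀ k ∈ Finset.range T, ∫⁻ ω, (‖X k ω‖₊ : ℝ≥0∞) ^ p ∂μ
      = ENNReal.ofReal (∫ ω, ‖X k ω‖ ^ p ∂μ) := fun k hk =>
    lint_eq (hXmem k (Finset.mem_range.mp hk))
  rw [hL, Finset.sum_congr rfl hR, ← ENNReal.ofReal_sum_of_nonneg
    (fun k _ => integral_nonneg (fun ω => Real.rpow_nonneg (norm_nonneg _) _)),
    ← ENNReal.ofReal_mul (by positivity)]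
  exact ENNReal.ofReal_le_ofReal hmain
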